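/- arXiv:1811.01649 — 2 statements merged into one kernel-verified Lean document; each statement's English description precedes it below -/
import Mathlib

section
/- Let \Phi(z,w,\zeta) be a formal power series with \Phi = O(\zeta^2) and let \varphi(z,\xi,\eta) be the unique formal solution of the PDE \varphi_{zz} = -i e^{i(m-1)\eta^{m-1}\varphi}\,\Phi(z, \eta e^{i\eta^{m-1}\varphi}, i e^{i(1-m)\eta^{m-1}\varphi}\varphi_z) - \eta^{m-1}(\varphi_z)^2 with Cauchy data \varphi(0,\xi,\eta) = 0 and \varphi_z(0,\xi,\eta) = \xi. Then \varphi also satisfies \varphi(z,0,\eta) = 0 and \varphi_\xi(z,0,\eta) = z. -/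
/-!
STATEMENT 5.  If `φ` solves the PDE obtained by substituting the defining equation
`w = η e^{i η^{m-1} φ(z,ξ,η)}` of an `m`-admissible Segre family into the singular ODE
`w'' = w^m Φ(z, w, w'/w^m)` (with `Φ = O(ζ²)`), with Cauchy data `φ(0,ξ,η) = 0`,
`φ_z(0,ξ,η) = ξ`, then automatically `φ(z,0,η) = 0` and `φ_ξ(z,0,η) = z`.
-/

noncomputable section

open scoped Classical

/-- Coefficientwise substitution of a tuple of power series into a series in 3 variables. -/
def msubst {σ : Type} (a : Fin 3 → MvPowerSeries σ ℂ)
    (f : MvPowerSeries (Fin 3) ℂ) : MvPowerSeries σ ℂ :=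
  fun d => ∑' e : Fin 3 →₀ ℕ,
    (MvPowerSeries.coeff (R := ℂ) e f) * MvPowerSeries.coeff (R := ℂ) d (∏ i, a i ^ e i)

/-- The formal exponential of a multivariate power series (intended for series with zero
constant term, where the sum is coefficientwise finite). -/
def mexp (S : MvPowerSeries (Fin 3) ℂ) : MvPowerSeries (Fin 3) ℂ :=
  fun d => ∑' n : ℕ, ((n.factorial : ℂ))⁻¹ * MvPowerSeries.coeff (R := ℂ) d (S ^ n)

/-- The formal partial derivative of a series in 3 variables in the `i`-th variable. -/
def pd (i : Fin 3) (f : MvPowerSeries (Fin 3) ℂ) : MvPowerSeries (Fin 3) ℂ :=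
  fun d => ((d i : ℕ) + 1 : ℂ) * MvPowerSeries.coeff (R := ℂ) (d + Finsupp.single i 1) f

private lemma coeff_mul_right_zero (f g : MvPowerSeries (Fin 3) ℂ) (b : Fin 3 →₀ ℕ)
    (h : ∀ q : Fin 3 →₀ ℕ, (∀ i, q i ≤ b i) → MvPowerSeries.coeff (R := ℂ) q g = 0) :
    MvPowerSeries.coeff (R := ℂ) b (f * g) = 0 := by
  rw [MvPowerSeries.coeff_mul]
  refine Finset.sum_eq_zero fun p hp => ?_
  rw [Finset.HasAntidiagonal.mem_antidiagonal] at hp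
  rw [h p.2 (fun i => by rw [← hp, Finsupp.add_apply]; exact le_add_self), mul_zero]

private lemma coeff_mul_mul_zero (h f g : MvPowerSeries (Fin 3) ℂ) (b : Fin 3 →₀ ℕ)
    (hb : b 1 ≤ 1)
    (hf : ∀ u : Fin 3 →₀ ℕ, (∀ i, u i ≤ b i) → u 1 = 0 → MvPowerSeries.coeff (R := ℂ) u f = 0)
    (hg : ∀ u : Fin 3 →₀ ℕ, (∀ i, u i ≤ b i) → u 1 = 0 → MvPowerSeries.coeff (R := ℂ) u g = 0) :
    MvPowerSeries.coeff (R := ℂ) b (h * f * g) = 0 := by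
  rw [mul_assoc]
  refine coeff_mul_right_zero _ _ _ fun q hq => ?_
  rw [MvPowerSeries.coeff_mul]
  refine Finset.sum_eq_zero fun p hp => ?_
  rw [Finset.HasAntidiagonal.mem_antidiagonal] at hp
  have hpq : ∀ i, p.1 i + p.2 i = q i := fun i => by rw [← hp, Finsupp.add_apply]
  have h1 : p.1 1 + p.2 1 ≤ 1 := by have := hpq 1; have := hq 1; omega
  rcases Nat.eq_zero_or_pos (p.1 1) with h0 | h0
  · rw [hf p.1 (fun i => by have := hpq i; have := hq i; omega) h0, zero_mul]
  · have h2 : p.2 1 = 0 := by omega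
    rw [hg p.2 (fun i => by have := hpq i; have := hq i; omega) h2, mul_zero]

private lemma coeff_msubst_zero (Φ : MvPowerSeries (Fin 3) ℂ)
    (hΦ : ∀ d : Fin 3 →₀ ℕ, d 2 < 2 → MvPowerSeries.coeff (R := ℂ) d Φ = 0)
    (A0 A1 h2 g2 : MvPowerSeries (Fin 3) ℂ) (b : Fin 3 →₀ ℕ) (hb : b 1 ≤ 1)
    (hg : ∀ u : Fin 3 →₀ ℕ, (∀ i, u i ≤ b i) → u 1 = 0 →
      MvPowerSeries.coeff (R := ℂ) u (h2 * g2) = 0) :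
    MvPowerSeries.coeff (R := ℂ) b (msubst ![A0, A1, h2 * g2] Φ) = 0 := by
  have hterm : ∀ e' : Fin 3 →₀ ℕ,
      MvPowerSeries.coeff (R := ℂ) e' Φ
        * MvPowerSeries.coeff (R := ℂ) b (∏ i, (![A0, A1, h2 * g2]) i ^ e' i) = 0 := by
    intro e'
    rcases lt_or_ge (e' 2) 2 with h | h
    · rw [hΦ e' h, zero_mul]
    · have hprod : (∏ i, (![A0, A1, h2 * g2]) i ^ e' i)
          = (A0 ^ e' 0 * A1 ^ e' 1 * (h2 * g2) ^ (e' 2 - 2)) * (h2 * g2) * (h2 * g2) := by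
        rw [Fin.prod_univ_three]
        simp only [Matrix.cons_val_zero, Matrix.cons_val_one, Matrix.head_cons,
          Matrix.cons_val_two, Matrix.tail_cons]
        have h22 : (h2 * g2) ^ e' 2 = (h2 * g2) ^ (e' 2 - 2) * (h2 * g2) * (h2 * g2) := by
          rw [← pow_succ, ← pow_succ]
          congr 1
          omega
        rw [h22]; ring
      rw [hprod, coeff_mul_mul_zero _ _ _ _ hb hg hg, mul_zero]
  calc MvPowerSeries.coeff (R := ℂ) b (msubst ![A0, A1, h2 * g2] Φ)
      = ∑' e' : Fin 3 →₀ ℕ, MvPowerSeries.coeff (R := ℂ) e' Φ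
          * MvPowerSeries.coeff (R := ℂ) b (∏ i, (![A0, A1, h2 * g2]) i ^ e' i) := rfl
    _ = 0 := by simp [hterm]

theorem segre_family_normalization_in_xi
    (m : ℕ) (hm : 1 ≤ m) (Φ φ : MvPowerSeries (Fin 3) ℂ)
    -- `Φ = O(ζ²)` (third variable `ζ`)
    (hΦ : ∀ d : Fin 3 →₀ ℕ, d 2 < 2 → MvPowerSeries.coeff (R := ℂ) d Φ = 0)
    -- Cauchy data: `φ(0, ξ, η) = 0`
    (hc0 : ∀ d : Fin 3 →₀ ℕ, d 0 = 0 → MvPowerSeries.coeff (R := ℂ) d φ = 0)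
    -- Cauchy data: `φ_z(0, ξ, η) = ξ`
    (hc1 : ∀ d : Fin 3 →₀ ℕ, d 0 = 1 →
      MvPowerSeries.coeff (R := ℂ) d φ = if d 1 = 1 ∧ d 2 = 0 then 1 else 0)
    -- the PDE (3.11):
    -- `φ_zz = -i e^{i(m-1)η^{m-1}φ} Φ(z, η e^{iη^{m-1}φ}, i e^{i(1-m)η^{m-1}φ} φ_z)
    --         - η^{m-1} (φ_z)²`
    (hPDE : pd 0 (pd 0 φ) =
      (MvPowerSeries.C (σ := Fin 3) (R := ℂ) (-Complex.I))
        * mexp (MvPowerSeries.C (σ := Fin 3) (R := ℂ) (Complex.I * ((m : ℂ) - 1))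
                  * (MvPowerSeries.X 2) ^ (m - 1) * φ)
        * msubst
            ![MvPowerSeries.X 0,
              MvPowerSeries.X 2
                * mexp (MvPowerSeries.C (σ := Fin 3) (R := ℂ) Complex.I
                    * (MvPowerSeries.X 2) ^ (m - 1) * φ),
              MvPowerSeries.C (σ := Fin 3) (R := ℂ) Complex.I
                * mexp (MvPowerSeries.C (σ := Fin 3) (R := ℂ) (Complex.I * (1 - (m : ℂ)))
                    * (MvPowerSeries.X 2) ^ (m - 1) * φ)
                * pd 0 φ] Φ
      - (MvPowerSeries.X 2) ^ (m - 1) * (pd 0 φ) ^ 2) :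
    -- conclusion (3.13): `φ(z, 0, η) = 0` and `φ_ξ(z, 0, η) = z`
    (∀ d : Fin 3 →₀ ℕ, d 1 = 0 → MvPowerSeries.coeff (R := ℂ) d φ = 0) ∧
    (∀ d : Fin 3 →₀ ℕ, d 1 = 1 →
      MvPowerSeries.coeff (R := ℂ) d φ = if d 0 = 1 ∧ d 2 = 0 then 1 else 0) := by
  have coeffpd : ∀ (f : MvPowerSeries (Fin 3) ℂ) (d : Fin 3 →₀ ℕ),
      MvPowerSeries.coeff (R := ℂ) d (pd 0 f)
        = ((d 0 : ℕ) + 1 : ℂ)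
            * MvPowerSeries.coeff (R := ℂ) (d + (Finsupp.single 0 1 : Fin 3 →₀ ℕ)) f :=
    fun _ _ => rfl
  have key : ∀ n : ℕ, ∀ d : Fin 3 →₀ ℕ, d 0 = n → d 1 ≤ 1 →
      MvPowerSeries.coeff (R := ℂ) d φ
        = if d 0 = 1 ∧ d 1 = 1 ∧ d 2 = 0 then 1 else 0 := by
    intro n
    induction n using Nat.strong_induction_on with
    | _ n IH =>
      intro d hd0 hd1
      rcases n with _ | n
      · rw [hc0 d hd0]
        simp [hd0]
      rcases n with _ | n
      · rw [hc1 d (by omega)]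
        have h01 : d 0 = 1 := by omega
        simp [h01]
      -- n + 2 case
      set e : Fin 3 →₀ ℕ := d - (Finsupp.single 0 2 : Fin 3 →₀ ℕ) with he
      have he0 : e 0 = n := by
        rw [he]
        simp [Finsupp.tsub_apply]
        omega
      have he1 : e 1 = d 1 := by
        rw [he]
        simp [Finsupp.tsub_apply, Finsupp.single_apply]
      have hde : e + (Finsupp.single 0 1 : Fin 3 →₀ ℕ)
          + (Finsupp.single 0 1 : Fin 3 →₀ ℕ) = d := by
        ext i
        rcases eq_or_ne i 0 with rfl | hi
        · simp [he, Finsupp.tsub_apply]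
          omega
        · simp [he, Finsupp.tsub_apply, Finsupp.single_apply, Ne.symm hi]
      have hzero : ∀ u : Fin 3 →₀ ℕ, u 0 ≤ n → u 1 = 0 →
          MvPowerSeries.coeff (R := ℂ) u (pd 0 φ) = 0 := by
        intro u hu0 hu1
        rw [coeffpd]
        have ha0 : (u + (Finsupp.single 0 1 : Fin 3 →₀ ℕ)) 0 = u 0 + 1 := by simp
        have ha1 : (u + (Finsupp.single 0 1 : Fin 3 →₀ ℕ)) 1 = 0 := by
          simp [Finsupp.single_apply, hu1]
        rw [IH (u 0 + 1) (by omega) _ ha0 (by rw [ha1]; omega)]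
        simp [ha1]
      have hcoe := congrArg (MvPowerSeries.coeff (R := ℂ) e) hPDE
      rw [map_sub] at hcoe
      have hT2 : MvPowerSeries.coeff (R := ℂ) e
          ((MvPowerSeries.X 2 : MvPowerSeries (Fin 3) ℂ) ^ (m - 1) * (pd 0 φ) ^ 2) = 0 := by
        rw [sq, ← mul_assoc]
        refine coeff_mul_mul_zero _ _ _ _ (by rw [he1]; exact hd1) ?_ ?_ <;>
          · intro u hu hu1
            exact hzero u (by have := hu 0; omega) hu1
      have hT1 : MvPowerSeries.coeff (R := ℂ) e
          ((MvPowerSeries.C (σ := Fin 3) (R := ℂ) (-Complex.I))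
            * mexp (MvPowerSeries.C (σ := Fin 3) (R := ℂ) (Complex.I * ((m : ℂ) - 1))
                      * (MvPowerSeries.X 2) ^ (m - 1) * φ)
            * msubst
                ![MvPowerSeries.X 0,
                  MvPowerSeries.X 2
                    * mexp (MvPowerSeries.C (σ := Fin 3) (R := ℂ) Complex.I
                        * (MvPowerSeries.X 2) ^ (m - 1) * φ),
                  MvPowerSeries.C (σ := Fin 3) (R := ℂ) Complex.I
                    * mexp (MvPowerSeries.C (σ := Fin 3) (R := ℂ) (Complex.I * (1 - (m : ℂ)))
                        * (MvPowerSeries.X 2) ^ (m - 1) * φ)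
                    * pd 0 φ] Φ) = 0 := by
        refine coeff_mul_right_zero _ _ _ fun q hq => ?_
        refine coeff_msubst_zero Φ hΦ _ _ _ _ q
          (le_trans (hq 1) (by rw [he1]; exact hd1)) ?_
        intro u hu hu1
        refine coeff_mul_right_zero _ _ _ fun v hv => ?_
        refine hzero v ?_ ?_
        · have h1 := hv 0; have h2 := hu 0; have h3 := hq 0; omega
        · have := hv 1; omega
      have hL : MvPowerSeries.coeff (R := ℂ) e (pd 0 (pd 0 φ))
          = ((n : ℂ) + 1) * (((n : ℂ) + 2) * MvPowerSeries.coeff (R := ℂ) d φ) := by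
        rw [coeffpd, coeffpd]
        have h1 : (e + (Finsupp.single 0 1 : Fin 3 →₀ ℕ)) 0 = n + 1 := by simp [he0]
        rw [he0, h1, hde]
        push_cast
        ring
      have hmain : ((n : ℂ) + 1) * (((n : ℂ) + 2) * MvPowerSeries.coeff (R := ℂ) d φ) = 0 := by
        rw [← hL, hcoe, hT1, hT2, sub_zero]
      have h1 : ((n : ℂ) + 1) ≠ 0 := Nat.cast_add_one_ne_zero n
      have h2 : ((n : ℂ) + 2) ≠ 0 := by
        have h3 := Nat.cast_add_one_ne_zero (R := ℂ) (n + 1)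
        intro h
        apply h3
        push_cast
        linear_combination h
      rcases mul_eq_zero.mp hmain with h | h
      · exact absurd h h1
      rcases mul_eq_zero.mp h with h' | h'
      · exact absurd h' h2
      rw [h', if_neg]
      rintro ⟨h0, -⟩
      omega
  constructor
  · intro d hd
    rw [key (d 0) d rfl (by omega)]
    simp [hd]
  · intro d hd
    rw [key (d 0) d rfl (by omega)]
    simp [hd]

end
end

section
/- Let \rho(z,\xi,\eta) = \eta e^{\pm i \eta^{m-1}(z\xi + \sum_{k,l\ge2}\varphi_{kl}(\eta)z^k\xi^l)} define a positive (resp. negative) m-admissible Segre family. Then the dual defining function \rho^*, obtained by solving \eta = w e^{\pm i w^{m-1}(z\xi + O(z^2\xi^2))} for w, has the form \rho^*(z,\xi,\eta) = \eta e^{\mp i\eta^{m-1}(z\xi + O(z^2\xi^2))}; in particular the dual of a positive m-admissible family is a negative m-admissible family and vice versa. -/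
/-!
STATEMENT 13.  The dual of a positive (resp. negative) `m`-admissible Segre family is a
negative (resp. positive) `m`-admissible Segre family: if
`ρ(z,ξ,η) = η e^{ε i η^{m-1}(zξ + ∑_{k,l≥2} φ_{kl}(η) z^k ξ^l)}` (`ε = ±1`) and `ρ*` is
obtained by solving `η = w e^{ε i w^{m-1}(zξ + ∑ φ_{kl}(w) z^k ξ^l)}` for `w`, then
`ρ*(z,ξ,η) = η e^{-ε i η^{m-1}(zξ + ψ)}` with `ψ = O(z²ξ²)` of admissible form.
-/

noncomputable section

open scoped Classical

/-- `φ` is the series `z ξ + ∑_{k,l≥2} φ_{kl}(η) z^k ξ^l` in variables `(z, ξ, η)`. -/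
def IsAdmissiblePhi (φkl : ℕ → ℕ → PowerSeries ℂ) (φ : MvPowerSeries (Fin 3) ℂ) : Prop :=
  ∀ k l j : ℕ,
    MvPowerSeries.coeff (σ := Fin 3) (R := ℂ)
        (Finsupp.single 0 k + Finsupp.single 1 l + Finsupp.single 2 j) φ =
      if k = 1 ∧ l = 1 then (if j = 0 then 1 else 0)
      else if 2 ≤ k ∧ 2 ≤ l then PowerSeries.coeff (R := ℂ) j (φkl k l)
      else 0


open Finset in
abbrev MV := MvPowerSeries (Fin 3) ℂ

/-- lower bound on weight of support -/
def wlb (f : (Fin 3 →₀ ℕ) → ℕ) (n : ℕ) (A : MV) : Prop :=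
  ∀ d, MvPowerSeries.coeff (R := ℂ) d A ≠ 0 → n ≤ f d

lemma wlb_zero (f : (Fin 3 →₀ ℕ) → ℕ) (A : MV) : wlb f 0 A := fun _ _ => Nat.zero_le _

lemma wlb_mul {f : (Fin 3 →₀ ℕ) → ℕ} (hf : ∀ p q, f (p + q) = f p + f q)
    {a b : ℕ} {A B : MV} (hA : wlb f a A) (hB : wlb f b B) : wlb f (a + b) (A * B) := by
  intro d h
  rw [MvPowerSeries.coeff_mul] at h
  obtain ⟨p, hp, hne⟩ := Finset.exists_ne_zero_of_sum_ne_zero h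
  have h1 : MvPowerSeries.coeff (R := ℂ) p.1 A ≠ 0 := fun h0 => hne (by rw [h0, zero_mul])
  have h2 : MvPowerSeries.coeff (R := ℂ) p.2 B ≠ 0 := fun h0 => hne (by rw [h0, mul_zero])
  have := Finset.HasAntidiagonal.mem_antidiagonal.mp hp
  calc a + b ≤ f p.1 + f p.2 := Nat.add_le_add (hA _ h1) (hB _ h2)
  _ = f d := by rw [← hf, this]

lemma wlb_pow {f : (Fin 3 →₀ ℕ) → ℕ} (hf : ∀ p q, f (p + q) = f p + f q)
    {a : ℕ} {A : MV} (hA : wlb f a A) (n : ℕ) : wlb f (n * a) (A ^ n) := by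
  induction n with
  | zero => simpa using wlb_zero f _
  | succ k ih =>
      have := wlb_mul hf ih hA
      rw [pow_succ]
      simpa [Nat.succ_mul] using this

def wtot (d : Fin 3 →₀ ℕ) : ℕ := d 0 + d 1 + d 2

lemma wtot_add (p q : Fin 3 →₀ ℕ) : wtot (p + q) = wtot p + wtot q := by
  simp [wtot, Finsupp.add_apply]; ring

lemma w0_add (p q : Fin 3 →₀ ℕ) : (p + q) 0 = p 0 + q 0 := rfl
lemma w1_add (p q : Fin 3 →₀ ℕ) : (p + q) 1 = p 1 + q 1 := rfl

lemma wtot_eq_zero {d : Fin 3 →₀ ℕ} (h : wtot d = 0) : d = 0 := by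
  have h0 : d 0 = 0 ∧ d 1 = 0 ∧ d 2 = 0 := by unfold wtot at h; omega
  ext i; fin_cases i <;> simp [h0.1, h0.2.1, h0.2.2]

lemma wlb_wtot_one {A : MV} (hA : MvPowerSeries.constantCoeff (σ := Fin 3) (R := ℂ) A = 0) :
    wlb wtot 1 A := by
  intro d h
  by_contra hc
  have : wtot d = 0 := by omega
  rw [wtot_eq_zero this, MvPowerSeries.coeff_zero_eq_constantCoeff] at h
  exact h hA

lemma coeff_pow_eq_zero {A : MV} (hA : MvPowerSeries.constantCoeff (σ := Fin 3) (R := ℂ) A = 0)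
    {n : ℕ} {d : Fin 3 →₀ ℕ} (hd : wtot d < n) : MvPowerSeries.coeff (R := ℂ) d (A ^ n) = 0 := by
  by_contra h
  have := wlb_pow wtot_add (wlb_wtot_one hA) n d h
  omega

lemma mexp_coeff {S : MV} (hS : MvPowerSeries.constantCoeff (σ := Fin 3) (R := ℂ) S = 0)
    (d : Fin 3 →₀ ℕ) {N : ℕ} (hN : wtot d ≤ N) :
    MvPowerSeries.coeff (R := ℂ) d (mexp S) =
      ∑ n ∈ Finset.range (N + 1), ((n.factorial : ℂ))⁻¹ * MvPowerSeries.coeff (R := ℂ) d (S ^ n) := by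
  have : MvPowerSeries.coeff (R := ℂ) d (mexp S)
      = ∑' n : ℕ, ((n.factorial : ℂ))⁻¹ * MvPowerSeries.coeff (R := ℂ) d (S ^ n) := rfl
  rw [this]
  refine tsum_eq_sum (fun n hn => ?_)
  rw [Finset.mem_range, not_lt] at hn
  rw [coeff_pow_eq_zero hS (by omega), mul_zero]

lemma factorial_inv_choose {N j : ℕ} (h : j ≤ N) :
    ((N.factorial : ℂ))⁻¹ * (N.choose j : ℂ) =
      ((j.factorial : ℂ))⁻¹ * (((N - j).factorial : ℂ))⁻¹ := by
  have key : (N.choose j : ℂ) * j.factorial * (N - j).factorial = N.factorial := by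
    rw_mod_cast [Nat.choose_mul_factorial_mul_factorial h]
  have h1 : (N.factorial : ℂ) ≠ 0 := Nat.cast_ne_zero.mpr (Nat.factorial_ne_zero _)
  have h2 : (j.factorial : ℂ) ≠ 0 := Nat.cast_ne_zero.mpr (Nat.factorial_ne_zero _)
  have h3 : (((N - j).factorial : ℂ)) ≠ 0 := Nat.cast_ne_zero.mpr (Nat.factorial_ne_zero _)
  field_simp
  linear_combination key

lemma mexp_add {A B : MV} (hA : MvPowerSeries.constantCoeff (σ := Fin 3) (R := ℂ) A = 0)
    (hB : MvPowerSeries.constantCoeff (σ := Fin 3) (R := ℂ) B = 0) :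
    mexp (A + B) = mexp A * mexp B := by
  apply MvPowerSeries.ext
  intro d
  set N := wtot d with hNdef
  have hAB : MvPowerSeries.constantCoeff (σ := Fin 3) (R := ℂ) (A + B) = 0 := by
    rw [map_add, hA, hB, add_zero]
  -- the common value
  set g : ℕ → ℕ → ℂ := fun n k => ((n.factorial : ℂ))⁻¹ * ((k.factorial : ℂ))⁻¹ *
      MvPowerSeries.coeff (R := ℂ) d (A ^ n * B ^ k) with hg
  have hgzero : ∀ n k, N < n + k → g n k = 0 := by
    intro n k hnk
    have : MvPowerSeries.coeff (R := ℂ) d (A ^ n * B ^ k) = 0 := by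
      by_contra hc
      have := wlb_mul wtot_add (wlb_pow wtot_add (wlb_wtot_one hA) n)
        (wlb_pow wtot_add (wlb_wtot_one hB) k) d hc
      simp only [mul_one] at this
      omega
    rw [hg]; simp [this]
  have hRHS : MvPowerSeries.coeff (R := ℂ) d (mexp A * mexp B) =
      ∑ n ∈ Finset.range (N + 1), ∑ k ∈ Finset.range (N + 1), g n k := by
    rw [MvPowerSeries.coeff_mul]
    have hterm : ∀ p ∈ Finset.HasAntidiagonal.antidiagonal d,
        MvPowerSeries.coeff (R := ℂ) p.1 (mexp A) * MvPowerSeries.coeff (R := ℂ) p.2 (mexp B) =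
        ∑ n ∈ Finset.range (N + 1), ∑ k ∈ Finset.range (N + 1),
          (((n.factorial : ℂ))⁻¹ * MvPowerSeries.coeff (R := ℂ) p.1 (A ^ n)) *
          (((k.factorial : ℂ))⁻¹ * MvPowerSeries.coeff (R := ℂ) p.2 (B ^ k)) := by
      intro p hp
      have hpd := Finset.HasAntidiagonal.mem_antidiagonal.mp hp
      have h1 : wtot p.1 ≤ N := by rw [hNdef, ← hpd, wtot_add]; omega
      have h2 : wtot p.2 ≤ N := by rw [hNdef, ← hpd, wtot_add]; omega
      rw [mexp_coeff hA p.1 h1, mexp_coeff hB p.2 h2, Finset.sum_mul_sum]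
    rw [Finset.sum_congr rfl hterm, Finset.sum_comm]
    refine Finset.sum_congr rfl (fun n _ => ?_)
    rw [Finset.sum_comm]
    refine Finset.sum_congr rfl (fun k _ => ?_)
    rw [hg]
    simp only []
    rw [MvPowerSeries.coeff_mul, Finset.mul_sum]
    refine Finset.sum_congr rfl (fun p _ => ?_)
    ring
  have hLHS : MvPowerSeries.coeff (R := ℂ) d (mexp (A + B)) =
      ∑ n ∈ Finset.range (N + 1), ∑ k ∈ Finset.range (N + 1), g n k := by
    rw [mexp_coeff hAB d le_rfl]
    have hterm : ∀ N' ∈ Finset.range (N + 1),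
        ((N'.factorial : ℂ))⁻¹ * MvPowerSeries.coeff (R := ℂ) d ((A + B) ^ N') =
        ∑ p ∈ Finset.HasAntidiagonal.antidiagonal N', g p.1 p.2 := by
      intro N' _
      rw [Commute.add_pow (Commute.all A B), map_sum, Finset.mul_sum,
        Finset.Nat.sum_antidiagonal_eq_sum_range_succ_mk (fun p => g p.1 p.2)]
      refine Finset.sum_congr rfl (fun j hj => ?_)
      have hjN : j ≤ N' := by rw [Finset.mem_range] at hj; omega
      have hcast : A ^ j * B ^ (N' - j) * ((N'.choose j : ℕ) : MV)
          = (N'.choose j) • (A ^ j * B ^ (N' - j)) := by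
        rw [nsmul_eq_mul]; ring
      rw [hcast, map_nsmul, nsmul_eq_mul, hg]
      simp only []
      rw [← mul_assoc, factorial_inv_choose hjN]
    rw [Finset.sum_congr rfl hterm]
    have hdisj : (↑(Finset.range (N + 1)) : Set ℕ).PairwiseDisjoint Finset.HasAntidiagonal.antidiagonal := by
      intro x _ y _ hxy
      refine Finset.disjoint_left.mpr (fun p hpx hpy => ?_)
      rw [Finset.HasAntidiagonal.mem_antidiagonal] at hpx hpy
      exact hxy (by omega)
    rw [← Finset.sum_biUnion hdisj (f := fun p : ℕ × ℕ => g p.1 p.2)]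
    rw [← Finset.sum_product']
    refine Finset.sum_subset ?_ ?_
    · intro p hp
      rw [Finset.mem_biUnion] at hp
      obtain ⟨N', hN', hp⟩ := hp
      rw [Finset.mem_range] at hN'
      rw [Finset.HasAntidiagonal.mem_antidiagonal] at hp
      rw [Finset.mem_product, Finset.mem_range, Finset.mem_range]
      omega
    · intro p hp hnp
      refine hgzero p.1 p.2 ?_
      by_contra hc
      exact hnp (Finset.mem_biUnion.mpr ⟨p.1 + p.2, Finset.mem_range.mpr (by omega),
        Finset.HasAntidiagonal.mem_antidiagonal.mpr rfl⟩)
  rw [hLHS, hRHS]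

lemma mexp_zero : mexp (0 : MV) = 1 := by
  apply MvPowerSeries.ext
  intro d
  rw [mexp_coeff (by simp) d (le_refl (wtot d))]
  rw [Finset.sum_eq_single 0]
  · simp
  · intro n _ hn
    rw [zero_pow hn]
    simp
  · intro h
    exact absurd (Finset.mem_range.mpr (Nat.succ_pos _)) h

lemma mexp_mul_mexp_neg {S : MV} (hS : MvPowerSeries.constantCoeff (σ := Fin 3) (R := ℂ) S = 0) :
    mexp S * mexp (-S) = 1 := by
  have hneg : MvPowerSeries.constantCoeff (σ := Fin 3) (R := ℂ) (-S) = 0 := by rw [map_neg, hS, neg_zero]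
  rw [← mexp_add hS hneg, add_neg_cancel, mexp_zero]

lemma wlb_add {f : (Fin 3 →₀ ℕ) → ℕ} {k : ℕ} {A B : MV}
    (hA : wlb f k A) (hB : wlb f k B) : wlb f k (A + B) := by
  intro d h
  rw [map_add] at h
  rcases ne_or_eq (MvPowerSeries.coeff (R := ℂ) d A) 0 with h1 | h1
  · exact hA d h1
  · exact hB d (by intro h2; rw [h1, h2, add_zero] at h; exact h rfl)

lemma wlb_neg {f : (Fin 3 →₀ ℕ) → ℕ} {k : ℕ} {A : MV} (hA : wlb f k A) : wlb f k (-A) := by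
  intro d h
  rw [map_neg, neg_ne_zero] at h
  exact hA d h

lemma wlb_mexp_sub_one {f : (Fin 3 →₀ ℕ) → ℕ} (hf : ∀ p q, f (p + q) = f p + f q)
    {k : ℕ} {S : MV} (hS : MvPowerSeries.constantCoeff (σ := Fin 3) (R := ℂ) S = 0)
    (h : wlb f k S) : wlb f k (mexp S - 1) := by
  intro d hne
  by_contra hc
  rw [not_le] at hc
  apply hne
  rw [map_sub, mexp_coeff hS d (le_refl (wtot d))]
  have hzero : ∀ n ∈ Finset.range (wtot d + 1), n ≠ 0 →
      ((n.factorial : ℂ))⁻¹ * MvPowerSeries.coeff (R := ℂ) d (S ^ n) = 0 := by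
    intro n _ hn
    have : MvPowerSeries.coeff (R := ℂ) d (S ^ n) = 0 := by
      by_contra h2
      obtain ⟨n', rfl⟩ := Nat.exists_eq_succ_of_ne_zero hn
      rw [pow_succ] at h2
      have := wlb_mul hf (wlb_zero f (S ^ n')) h d h2
      omega
    rw [this, mul_zero]
  rw [Finset.sum_eq_single 0 hzero
    (fun h => absurd (Finset.mem_range.mpr (Nat.succ_pos _)) h)]
  simp

lemma wlb_pow_sub_one {f : (Fin 3 →₀ ℕ) → ℕ} (hf : ∀ p q, f (p + q) = f p + f q)
    {k : ℕ} {A : MV} (hA : wlb f k (A - 1)) (n : ℕ) : wlb f k (A ^ n - 1) := by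
  induction n with
  | zero => intro d h; simp at h
  | succ j ih =>
      have key : A ^ (j + 1) - 1 = A ^ j * (A - 1) + (A ^ j - 1) := by ring
      rw [key]
      exact wlb_add (by simpa using wlb_mul hf (wlb_zero f (A ^ j)) hA) ih

lemma wlb_X (i : Fin 3) : wlb (fun d => d i) 1 (MvPowerSeries.X i : MV) := by
  intro d h
  rw [MvPowerSeries.coeff_X] at h
  split at h
  · next heq => rw [heq]; simp
  · exact absurd rfl h

def E11 : Fin 3 →₀ ℕ := Finsupp.single 0 1 + Finsupp.single 1 1

lemma finsupp_decomp (e : Fin 3 →₀ ℕ) :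
    e = Finsupp.single 0 (e 0) + Finsupp.single 1 (e 1) + Finsupp.single 2 (e 2) := by
  ext i; fin_cases i <;> simp

lemma coeff_X0X1 (d : Fin 3 →₀ ℕ) :
    MvPowerSeries.coeff (R := ℂ) d (MvPowerSeries.X 0 * MvPowerSeries.X 1 : MV) =
      if d = E11 then 1 else 0 := by
  rw [show (MvPowerSeries.X 0 * MvPowerSeries.X 1 : MV) = MvPowerSeries.monomial E11 (1:ℂ) from by
    rw [MvPowerSeries.X_def, MvPowerSeries.X_def, MvPowerSeries.monomial_mul_monomial, one_mul]; rfl,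
    MvPowerSeries.coeff_monomial]

lemma wlb_triple_0 (ρs : MV) (e : Fin 3 →₀ ℕ) :
    wlb (fun p => p 0) (e 0) (MvPowerSeries.X 0 ^ e 0 * MvPowerSeries.X 1 ^ e 1 * ρs ^ e 2) := by
  have h := wlb_mul (f := fun p => p 0) (fun p q => rfl)
    (wlb_mul (fun p q => rfl) (wlb_pow (fun p q => rfl) (wlb_X 0) (e 0))
      (wlb_zero _ (MvPowerSeries.X 1 ^ e 1))) (wlb_zero _ (ρs ^ e 2))
  simpa using h

lemma wlb_triple_1 (ρs : MV) (e : Fin 3 →₀ ℕ) :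
    wlb (fun p => p 1) (e 1) (MvPowerSeries.X 0 ^ e 0 * MvPowerSeries.X 1 ^ e 1 * ρs ^ e 2) := by
  have h := wlb_mul (f := fun p => p 1) (fun p q => rfl)
    (wlb_mul (fun p q => rfl) (wlb_zero _ (MvPowerSeries.X 0 ^ e 0))
      (wlb_pow (fun p q => rfl) (wlb_X 1) (e 1))) (wlb_zero _ (ρs ^ e 2))
  simpa using h

lemma wlb_triple_2 {ρs : MV} (hρs0 : MvPowerSeries.constantCoeff (σ := Fin 3) (R := ℂ) ρs = 0)
    (e : Fin 3 →₀ ℕ) :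
    wlb wtot (e 2) (MvPowerSeries.X 0 ^ e 0 * MvPowerSeries.X 1 ^ e 1 * ρs ^ e 2) := by
  have h := wlb_mul wtot_add
    (wlb_mul wtot_add (wlb_zero _ (MvPowerSeries.X 0 ^ e 0))
      (wlb_zero _ (MvPowerSeries.X 1 ^ e 1)))
    (wlb_pow wtot_add (wlb_wtot_one hρs0) (e 2))
  simpa using h

lemma coeff_msubst_bad {φkl : ℕ → ℕ → PowerSeries ℂ} {φ : MV} (hφ : IsAdmissiblePhi φkl φ)
    {ρs : MV} (hρs0 : MvPowerSeries.constantCoeff (σ := Fin 3) (R := ℂ) ρs = 0)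
    (d : Fin 3 →₀ ℕ) (hd : ¬(2 ≤ d 0 ∧ 2 ≤ d 1)) :
    MvPowerSeries.coeff (R := ℂ) d (msubst ![MvPowerSeries.X 0, MvPowerSeries.X 1, ρs] φ) =
      MvPowerSeries.coeff (R := ℂ) d (MvPowerSeries.X 0 * MvPowerSeries.X 1 : MV) := by
  have hprod : ∀ e : Fin 3 →₀ ℕ,
      (∏ i, ![MvPowerSeries.X 0, MvPowerSeries.X 1, ρs] i ^ e i : MV)
      = MvPowerSeries.X 0 ^ e 0 * MvPowerSeries.X 1 ^ e 1 * ρs ^ e 2 := by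
    intro e; rw [Fin.prod_univ_three]; rfl
  have hcoeff : MvPowerSeries.coeff (R := ℂ) d (msubst ![MvPowerSeries.X 0, MvPowerSeries.X 1, ρs] φ)
      = ∑' e : Fin 3 →₀ ℕ, MvPowerSeries.coeff (R := ℂ) e φ *
          MvPowerSeries.coeff (R := ℂ) d (∏ i, ![MvPowerSeries.X 0, MvPowerSeries.X 1, ρs] i ^ e i) := rfl
  set D : Fin 3 →₀ ℕ := d + Finsupp.single 2 (wtot d) with hD
  have hD0 : D 0 = d 0 := by simp [hD]
  have hD1 : D 1 = d 1 := by simp [hD]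
  have hD2 : D 2 = d 2 + wtot d := by simp [hD]
  have hsupp : ∀ e : Fin 3 →₀ ℕ, e ∉ Finset.Iic D →
      MvPowerSeries.coeff (R := ℂ) e φ *
        MvPowerSeries.coeff (R := ℂ) d (∏ i, ![MvPowerSeries.X 0, MvPowerSeries.X 1, ρs] i ^ e i) = 0 := by
    intro e he
    rw [Finset.mem_Iic] at he
    have hex : ∃ i, D i < e i := by
      by_contra hno
      push_neg at hno
      exact he (Finsupp.le_def.mpr hno)
    suffices h : MvPowerSeries.coeff (R := ℂ) d
        (∏ i, ![MvPowerSeries.X 0, MvPowerSeries.X 1, ρs] i ^ e i) = 0 by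
      rw [h, mul_zero]
    rw [hprod]
    obtain ⟨i, hi⟩ := hex
    by_contra hne
    fin_cases i
    · have h' := wlb_triple_0 ρs e d hne
      have hi' : D 0 < e 0 := hi
      simp only at h'; omega
    · have h' := wlb_triple_1 ρs e d hne
      have hi' : D 1 < e 1 := hi
      simp only at h'; omega
    · have h' := wlb_triple_2 hρs0 e d hne
      have hi' : D 2 < e 2 := hi
      rw [hD2] at hi'
      unfold wtot at h' hi'
      omega
  rw [hcoeff, tsum_eq_sum hsupp]
  have hce : ∀ e ∈ Finset.Iic D,
      MvPowerSeries.coeff (R := ℂ) e φ *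
        MvPowerSeries.coeff (R := ℂ) d (∏ i, ![MvPowerSeries.X 0, MvPowerSeries.X 1, ρs] i ^ e i)
      = if e = E11 then MvPowerSeries.coeff (R := ℂ) d (MvPowerSeries.X 0 * MvPowerSeries.X 1 : MV)
        else 0 := by
    intro e _
    have hφe := hφ (e 0) (e 1) (e 2)
    rw [← finsupp_decomp e] at hφe
    rw [hprod]
    by_cases h11 : e 0 = 1 ∧ e 1 = 1
    · by_cases h20 : e 2 = 0
      · have heE : e = E11 := by
          rw [finsupp_decomp e, h11.1, h11.2, h20]
          simp [E11]
        rw [if_pos heE, hφe, if_pos h11, if_pos h20, one_mul, h11.1, h11.2, h20]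
        rw [pow_one, pow_one, pow_zero, mul_one]
      · have hne : e ≠ E11 := by
          intro h
          apply h20
          rw [h]
          simp [E11]
        rw [if_neg hne, hφe, if_pos h11, if_neg h20, zero_mul]
    · have hne : e ≠ E11 := by
        intro h
        apply h11
        rw [h]
        constructor <;> simp [E11]
      rw [if_neg hne]
      by_cases h22 : 2 ≤ e 0 ∧ 2 ≤ e 1
      · have hz : MvPowerSeries.coeff (R := ℂ) d
            (MvPowerSeries.X 0 ^ e 0 * MvPowerSeries.X 1 ^ e 1 * ρs ^ e 2) = 0 := by
          by_contra hne2
          have h0 := wlb_triple_0 ρs e d hne2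
          have h1 := wlb_triple_1 ρs e d hne2
          simp only at h0 h1
          push_neg at hd
          omega
        rw [hz, mul_zero]
      · rw [hφe, if_neg h11, if_neg h22, zero_mul]
  rw [Finset.sum_congr rfl hce, Finset.sum_ite_eq']
  by_cases hE : E11 ∈ Finset.Iic D
  · rw [if_pos hE]
  · rw [if_neg hE, coeff_X0X1]
    have hd0 : d 0 = 0 ∨ d 1 = 0 := by
      rw [Finset.mem_Iic] at hE
      by_contra hc
      push_neg at hc
      apply hE
      rw [Finsupp.le_def]
      intro i
      fin_cases i
      · simp only [E11, hD0]; simp; omega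
      · simp only [E11, hD1]; simp; omega
      · simp [E11, hD2]
    rw [if_neg]
    intro h
    rcases hd0 with h0 | h0 <;> rw [h] at h0 <;> simp [E11] at h0

theorem dual_of_admissible_Segre_family_is_admissible_with_opposite_sign
    (m : ℕ) (hm : 1 ≤ m) (ε : ℤ) (hε : ε = 1 ∨ ε = -1)
    (φkl : ℕ → ℕ → PowerSeries ℂ) (φ : MvPowerSeries (Fin 3) ℂ)
    (hφ : IsAdmissiblePhi φkl φ)
    (ρs : MvPowerSeries (Fin 3) ℂ)
    (hρs0 : MvPowerSeries.constantCoeff (σ := Fin 3) (R := ℂ) ρs = 0)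
    -- `ρ*` solves `η = w e^{ε i w^{m-1} φ(z, ξ, w)}` for `w`:
    (hsolve : MvPowerSeries.X 2 =
      ρs * mexp (MvPowerSeries.C (σ := Fin 3) (R := ℂ) ((ε : ℂ) * Complex.I) * ρs ^ (m - 1)
        * msubst ![MvPowerSeries.X 0, MvPowerSeries.X 1, ρs] φ)) :
    ∃ ψ : MvPowerSeries (Fin 3) ℂ,
      (∀ d : Fin 3 →₀ ℕ, ¬(2 ≤ d 0 ∧ 2 ≤ d 1) → MvPowerSeries.coeff (R := ℂ) d ψ = 0) ∧
      ρs = MvPowerSeries.X 2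
        * mexp (MvPowerSeries.C (σ := Fin 3) (R := ℂ) (-(ε : ℂ) * Complex.I)
            * (MvPowerSeries.X 2) ^ (m - 1)
            * (MvPowerSeries.X 0 * MvPowerSeries.X 1 + ψ)) := by
  classical
  set M : MV := msubst ![MvPowerSeries.X 0, MvPowerSeries.X 1, ρs] φ with hMdef
  set S : MV := MvPowerSeries.C (σ := Fin 3) (R := ℂ) ((ε : ℂ) * Complex.I) * ρs ^ (m - 1) * M with hSdef
  have hM_bad : ∀ d : Fin 3 →₀ ℕ, ¬(2 ≤ d 0 ∧ 2 ≤ d 1) →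
      MvPowerSeries.coeff (R := ℂ) d M =
        MvPowerSeries.coeff (R := ℂ) d (MvPowerSeries.X 0 * MvPowerSeries.X 1 : MV) :=
    fun d hd => coeff_msubst_bad hφ hρs0 d hd
  have hMw0 : wlb (fun p => p 0) 1 M := by
    intro d h
    show (1:ℕ) ≤ d 0
    by_contra hc
    have hd0 : d 0 = 0 := by omega
    have hbad : ¬(2 ≤ d 0 ∧ 2 ≤ d 1) := by omega
    rw [hM_bad d hbad, coeff_X0X1, if_neg] at h
    · exact h rfl
    · intro he; rw [he] at hd0; simp [E11] at hd0
  have hMw1 : wlb (fun p => p 1) 1 M := by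
    intro d h
    show (1:ℕ) ≤ d 1
    by_contra hc
    have hd0 : d 1 = 0 := by omega
    have hbad : ¬(2 ≤ d 0 ∧ 2 ≤ d 1) := by omega
    rw [hM_bad d hbad, coeff_X0X1, if_neg] at h
    · exact h rfl
    · intro he; rw [he] at hd0; simp [E11] at hd0
  have hM0 : MvPowerSeries.constantCoeff (σ := Fin 3) (R := ℂ) M = 0 := by
    have h := hM_bad 0 (by simp)
    rw [coeff_X0X1] at h
    rw [if_neg] at h
    · rw [← MvPowerSeries.coeff_zero_eq_constantCoeff_apply]
      exact h
    · intro he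
      have h0 : (0 : Fin 3 →₀ ℕ) 0 = E11 0 := by rw [he]
      simp [E11] at h0
  have hS0 : MvPowerSeries.constantCoeff (σ := Fin 3) (R := ℂ) S = 0 := by
    rw [hSdef, map_mul, hM0, mul_zero]
  have hSw0 : wlb (fun p => p 0) 1 S := by
    rw [hSdef]
    have h := wlb_mul (f := fun p => p 0) (fun p q => rfl)
      (wlb_zero _ (MvPowerSeries.C (σ := Fin 3) (R := ℂ) ((ε : ℂ) * Complex.I) * ρs ^ (m - 1))) hMw0
    rwa [zero_add] at h
  have hSw1 : wlb (fun p => p 1) 1 S := by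
    rw [hSdef]
    have h := wlb_mul (f := fun p => p 1) (fun p q => rfl)
      (wlb_zero _ (MvPowerSeries.C (σ := Fin 3) (R := ℂ) ((ε : ℂ) * Complex.I) * ρs ^ (m - 1))) hMw1
    rwa [zero_add] at h
  have hnS0 : MvPowerSeries.constantCoeff (σ := Fin 3) (R := ℂ) (-S) = 0 := by rw [map_neg, hS0, neg_zero]
  set V : MV := mexp (-S) with hVdef
  have hunit : mexp S * V = 1 := mexp_mul_mexp_neg hS0
  have hρ : ρs = MvPowerSeries.X 2 * V := by
    calc ρs = ρs * (mexp S * V) := by rw [hunit, mul_one]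
    _ = ρs * mexp S * V := by ring
    _ = MvPowerSeries.X 2 * V := by rw [← hsolve]
  have hVw0 : wlb (fun p => p 0) 1 (V - 1) :=
    wlb_mexp_sub_one (fun p q => rfl) hnS0 (wlb_neg hSw0)
  have hVw1 : wlb (fun p => p 1) 1 (V - 1) :=
    wlb_mexp_sub_one (fun p q => rfl) hnS0 (wlb_neg hSw1)
  have hVmw0 : wlb (fun p => p 0) 1 (V ^ (m - 1) - 1) :=
    wlb_pow_sub_one (fun p q => rfl) hVw0 (m - 1)
  have hVmw1 : wlb (fun p => p 1) 1 (V ^ (m - 1) - 1) :=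
    wlb_pow_sub_one (fun p q => rfl) hVw1 (m - 1)
  refine ⟨V ^ (m - 1) * M - MvPowerSeries.X 0 * MvPowerSeries.X 1, ?_, ?_⟩
  · intro d hd
    have hsplit : V ^ (m - 1) * M - MvPowerSeries.X 0 * MvPowerSeries.X 1
        = (V ^ (m - 1) - 1) * M + (M - MvPowerSeries.X 0 * MvPowerSeries.X 1) := by ring
    rw [hsplit, map_add, map_sub]
    have h1 : MvPowerSeries.coeff (R := ℂ) d ((V ^ (m - 1) - 1) * M) = 0 := by
      by_contra h
      have h0 := wlb_mul (f := fun p => p 0) (fun p q => rfl) hVmw0 hMw0 d h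
      have h1' := wlb_mul (f := fun p => p 1) (fun p q => rfl) hVmw1 hMw1 d h
      simp only at h0 h1'
      push_neg at hd
      omega
    rw [h1, hM_bad d hd, zero_add, sub_self]
  · have hexp : MvPowerSeries.C (σ := Fin 3) (R := ℂ) (-(ε : ℂ) * Complex.I)
        * MvPowerSeries.X 2 ^ (m - 1)
        * (MvPowerSeries.X 0 * MvPowerSeries.X 1
            + (V ^ (m - 1) * M - MvPowerSeries.X 0 * MvPowerSeries.X 1)) = -S := by
      have h1 : ρs ^ (m - 1) = MvPowerSeries.X 2 ^ (m - 1) * V ^ (m - 1) := by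
        rw [hρ, mul_pow]
      have h2 : MvPowerSeries.C (σ := Fin 3) (R := ℂ) (-(ε : ℂ) * Complex.I)
          = - MvPowerSeries.C (σ := Fin 3) (R := ℂ) ((ε : ℂ) * Complex.I) := by
        rw [show (-(ε : ℂ) * Complex.I) = -((ε : ℂ) * Complex.I) from by ring, map_neg]
      rw [hSdef, h1, h2]
      ring
    rw [hexp, ← hVdef]
    exact hρ

end
end
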